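/- Proposition 1 (interventional version): Let f : (Fin p → ℝ) → ℝ be additive in coordinate j', i.e. f(x) = g(x_{j'}) + r(x) with r not depending on coordinate j', and let x^(1), …, x^(n) : Fin p → ℝ (n ≥ 1) be a background dataset. Then there exists c ∈ ℝ such that for every point x : Fin p → ℝ, the interventional SHAP value of feature j' at x equals PD_{j'}(x_{j'}) + c, where PD_{j'} is the empirical partial dependence function of feature j'; moreover one may take c = −(1/n) Σ_{i=1}^n f(x^(i)). -/

import Mathlib

/-- The Shapley value of player `j` for the value function `v`. -/
noncomputable def shapley {p : ℕ} (v : Finset (Fin p) → ℝ) (j : Fin p) : ℝ :=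
  ∑ S ∈ (Finset.univ.erase j).powerset,
    (((S.card.factorial * (p - S.card - 1).factorial : ℕ) : ℝ) / (p.factorial : ℝ)) *
      (v (S ∪ {j}) - v S)

/-- `f` does not depend on coordinate `j`: `f x = f y` whenever `x k = y k` for all `k ≠ j`. -/
def NotDependsOn {p : ℕ} (f : (Fin p → ℝ) → ℝ) (j : Fin p) : Prop :=
  ∀ x y : Fin p → ℝ, (∀ k : Fin p, k ≠ j → x k = y k) → f x = f y

/-- The interventional contribution function of the model `f` at point `x`, with
background dataset `X 1, …, X n`: coordinates in `S` are taken from `x`, the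
remaining ones from the background observations. -/
noncomputable def interv {p n : ℕ} (f : (Fin p → ℝ) → ℝ) (X : Fin n → Fin p → ℝ)
    (x : Fin p → ℝ) (S : Finset (Fin p)) : ℝ :=
  (1 / n : ℝ) * ∑ i : Fin n, f (S.piecewise x (X i))

/-- The empirical partial dependence function of feature `j` for the model `f` with
background dataset `X 1, …, X n`. -/
noncomputable def pdep {p n : ℕ} (f : (Fin p → ℝ) → ℝ) (X : Fin n → Fin p → ℝ)
    (j : Fin p) (t : ℝ) : ℝ :=
  (1 / n : ℝ) * ∑ i : Fin n, f (Function.update (X i) j t)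

lemma weight_sum {p : ℕ} (j : Fin p) :
    ∑ S ∈ (Finset.univ.erase j).powerset,
      (((S.card.factorial * (p - S.card - 1).factorial : ℕ) : ℝ) / (p.factorial : ℝ)) = 1 := by
  have hp : 0 < p := j.pos
  have hcard : (Finset.univ.erase j).card = p - 1 := by
    rw [Finset.card_erase_of_mem (Finset.mem_univ j), Finset.card_univ, Fintype.card_fin]
  rw [Finset.powerset_card_disjiUnion]; erw [Finset.sum_disjiUnion]
  have hfac : (p.factorial : ℝ) = p * (p - 1).factorial := by
    rw [← Nat.mul_factorial_pred hp.ne']; push_cast; ring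
  have hfacpos : (0:ℝ) < (p.factorial : ℝ) := Nat.cast_pos.mpr p.factorial_pos
  have this1 : ∀ k ∈ Finset.range ((Finset.univ.erase j).card + 1),
      ∑ S ∈ Finset.powersetCard k (Finset.univ.erase j),
        (((S.card.factorial * (p - S.card - 1).factorial : ℕ) : ℝ) / (p.factorial : ℝ))
      = (1 : ℝ) / p := by
    intro k hk
    rw [Finset.mem_range, hcard] at hk
    have hk' : k ≤ p - 1 := Nat.lt_succ_iff.mp hk
    have hSk : ∀ S ∈ Finset.powersetCard k (Finset.univ.erase j), S.card = k := by
      intro S hS; exact (Finset.mem_powersetCard.mp hS).2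
    rw [Finset.sum_congr rfl (fun S hS => by rw [hSk S hS])]
    rw [Finset.sum_const, Finset.card_powersetCard, hcard, nsmul_eq_mul]
    have key : (p - 1).choose k * (k.factorial * (p - k - 1).factorial) = (p - 1).factorial := by
      have := Nat.choose_mul_factorial_mul_factorial hk'
      have h1 : p - k - 1 = p - 1 - k := by omega
      rw [h1, ← mul_assoc, this]
    have : ((p - 1).choose k : ℝ) * ((k.factorial * (p - k - 1).factorial : ℕ) : ℝ)
        = ((p-1).factorial : ℝ) := by exact_mod_cast congrArg Nat.cast key
    rw [← mul_div_assoc, this, hfac]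
    have hppos : (0:ℝ) < p := Nat.cast_pos.mpr hp
    have hfp : (0:ℝ) < ((p-1).factorial : ℝ) := Nat.cast_pos.mpr (p-1).factorial_pos
    field_simp
  rw [Finset.sum_congr rfl this1, Finset.sum_const, Finset.card_range, hcard, nsmul_eq_mul]
  have : ((p - 1 + 1 : ℕ) : ℝ) = p := by
    have : p - 1 + 1 = p := by omega
    rw [this]
  rw [this]
  have hppos : (0:ℝ) < p := Nat.cast_pos.mpr hp
  field_simp


/-- Proposition 1, interventional version: if `f` is additive in
coordinate `j'`, i.e. `f x = g (x j') + r x` with `r` not depending on coordinate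
`j'`, then there exists `c ∈ ℝ` such that for every point `x`, the interventional
SHAP value of feature `j'` at `x` equals `PD_{j'}(x j') + c`; moreover one may take
`c = -(1/n) Σ_i f (X i)`. -/
theorem interventional_shap_eq_pdep_of_additive {p n : ℕ} (hn : 1 ≤ n)
    (f : (Fin p → ℝ) → ℝ) (g : ℝ → ℝ) (r : (Fin p → ℝ) → ℝ) (j' : Fin p)
    (hr : NotDependsOn r j') (hf : ∀ x : Fin p → ℝ, f x = g (x j') + r x)
    (X : Fin n → Fin p → ℝ) :
    ∃ c : ℝ,
      (∀ x : Fin p → ℝ, shapley (interv f X x) j' = pdep f X j' (x j') + c) ∧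
        c = -((1 / n : ℝ) * ∑ i : Fin n, f (X i)) := by
  classical
  refine ⟨-((1 / n : ℝ) * ∑ i : Fin n, f (X i)), ?_, rfl⟩
  intro x
  have hnpos : (0:ℝ) < n := by exact_mod_cast hn
  set d : ℝ := g (x j') - (1/n:ℝ) * ∑ i : Fin n, g (X i j') with hd
  have hdiff : ∀ S ∈ (Finset.univ.erase j').powerset,
      interv f X x (S ∪ {j'}) - interv f X x S = d := by
    intro S hS
    have hjS : j' ∉ S := fun h =>
      (Finset.mem_erase.mp (Finset.mem_powerset.mp hS h)).1 rfl
    unfold interv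
    rw [← mul_sub, ← Finset.sum_sub_distrib]
    have hterm : ∀ i : Fin n,
        f ((S ∪ {j'}).piecewise x (X i)) - f (S.piecewise x (X i))
          = g (x j') - g (X i j') := by
      intro i
      rw [hf, hf]
      have h1 : (S ∪ {j'}).piecewise x (X i) j' = x j' :=
        Finset.piecewise_eq_of_mem _ _ _ (by simp)
      have h2 : S.piecewise x (X i) j' = X i j' :=
        Finset.piecewise_eq_of_notMem _ _ _ hjS
      have h3 : r ((S ∪ {j'}).piecewise x (X i)) = r (S.piecewise x (X i)) := by
        apply hr
        intro k hk
        by_cases hkS : k ∈ S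
        · rw [Finset.piecewise_eq_of_mem _ _ _ (Finset.mem_union_left _ hkS),
              Finset.piecewise_eq_of_mem _ _ _ hkS]
        · have hk2 : k ∉ S ∪ {j'} := by simp [hkS, hk]
          rw [Finset.piecewise_eq_of_notMem _ _ _ hk2,
              Finset.piecewise_eq_of_notMem _ _ _ hkS]
      rw [h1, h2, h3]; ring
    rw [Finset.sum_congr rfl (fun i _ => hterm i), Finset.sum_sub_distrib,
      Finset.sum_const, Finset.card_univ, Fintype.card_fin, nsmul_eq_mul, hd]
    field_simp
  have hshap : shapley (interv f X x) j' = d := by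
    unfold shapley
    rw [Finset.sum_congr rfl (fun S hS => by rw [hdiff S hS]), ← Finset.sum_mul,
      weight_sum j', one_mul]
  rw [hshap]
  unfold pdep
  have h1 : ∀ i : Fin n, f (Function.update (X i) j' (x j')) = g (x j') + r (X i) := by
    intro i
    rw [hf]
    simp only [Function.update_self]
    congr 1
    exact hr _ _ (fun k hk => Function.update_of_ne hk _ _)
  rw [Finset.sum_congr rfl (fun i _ => h1 i),
    Finset.sum_congr rfl (fun i _ => hf (X i)),
    Finset.sum_add_distrib, Finset.sum_add_distrib, Finset.sum_const,
    Finset.card_univ, Fintype.card_fin, nsmul_eq_mul, hd]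
  field_simp
  ring
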